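/- Let P ⊆ ℝ^d be a closed convex cone spanning ℝ^d with P ∩ (−P) = {0}, and let Ω be the interior of P. Let H̃ be a complex Hilbert space, let U : ℝ^d → B(H̃) be a group homomorphism into the unitary operators on H̃ (U_{x+y} = U_x U_y, U_0 = I), and let H ⊆ H̃ be a closed subspace such that: (i) U_a(H) ⊆ H for every a ∈ Ω; (ii) ⋂_{a∈Ω} U_a(H) = {0}; (iii) ⋃_{a∈Ω} U_{−a}(H) is dense in H̃. Let K = H^⊥. Then ⋂_{a∈Ω} U_{−a}(K) = {0}. -/

import Mathlib

/-- Let `P ⊆ ℝ^d` be a closed convex cone spanning `ℝ^d` with `P ∩ (−P) = {0}`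
and interior `Ω`. Let `U : ℝ^d → U(H̃)` be a unitary representation, and `H ⊆ H̃` a closed
subspace invariant under `U_a` for `a ∈ Ω`, with `⋂_{a∈Ω} U_a(H) = {0}` and
`⋃_{a∈Ω} U_{−a}(H)` dense. Then for `K = Hᗮ` we have `⋂_{a∈Ω} U_{−a}(K) = {0}`. -/
theorem pure_compression_of_dilation {d : ℕ}
    (P : Set (EuclideanSpace ℝ (Fin d)))
    (hPclosed : IsClosed P)
    (hPadd : ∀ x ∈ P, ∀ y ∈ P, x + y ∈ P)
    (hPsmul : ∀ (t : ℝ), 0 ≤ t → ∀ x ∈ P, t • x ∈ P)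
    (hPspan : Submodule.span ℝ P = ⊤)
    (hPpointed : P ∩ (-P) = {0})
    {H' : Type*} [NormedAddCommGroup H'] [InnerProductSpace ℂ H'] [CompleteSpace H']
    (U : EuclideanSpace ℝ (Fin d) → (H' ≃ₗᵢ[ℂ] H'))
    (hU0 : U 0 = LinearIsometryEquiv.refl ℂ H')
    (hUadd : ∀ x y, ∀ ξ : H', U (x + y) ξ = U x (U y ξ))
    (H : Submodule ℂ H')
    (hHclosed : IsClosed (H : Set H'))
    (hinv : ∀ a ∈ interior P, ⇑(U a) '' (H : Set H') ⊆ (H : Set H'))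
    (hpure : (⋂ a ∈ interior P, ⇑(U a) '' (H : Set H')) = {0})
    (hdense : Dense (⋃ a ∈ interior P, ⇑(U (-a)) '' (H : Set H'))) :
    (⋂ a ∈ interior P, ⇑(U (-a)) '' (Hᗮ : Set H')) = {0} := by
  apply Set.eq_singleton_iff_unique_mem.mpr
  constructor
  · refine Set.mem_iInter₂.mpr fun a ha => ⟨0, Hᗮ.zero_mem, ?_⟩
    simp
  · intro ξ hξ
    rw [Set.mem_iInter₂] at hξ
    have key : ∀ x ∈ (⋃ a ∈ interior P, ⇑(U (-a)) '' (H : Set H')),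
        (inner ℂ ξ x : ℂ) = 0 := by
      intro x hx
      rw [Set.mem_iUnion₂] at hx
      obtain ⟨a, ha, η, hη, rfl⟩ := hx
      obtain ⟨ζ, hζ, rfl⟩ := hξ a ha
      rw [LinearIsometryEquiv.inner_map_map]
      exact (Submodule.mem_orthogonal' H ζ).mp hζ η hη
    have hcl : IsClosed {y : H' | (inner ℂ ξ y : ℂ) = 0} :=
      isClosed_eq (continuous_const.inner continuous_id) continuous_const
    have hall : ∀ x : H', (inner ℂ ξ x : ℂ) = 0 := by
      intro x
      have hx : x ∈ closure (⋃ a ∈ interior P, ⇑(U (-a)) '' (H : Set H')) := hdense x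
      exact hcl.closure_subset_iff.mpr key hx
    have := hall ξ
    rwa [inner_self_eq_zero] at this
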